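/- Let I = I(C_{2n+1}) be the edge ideal of the odd cycle C_{2n+1}. Then for every t ≥ 1, α(I^(t)) = 2t − ⌊t/(n+1)⌋. -/

import Mathlib

open MvPolynomial

noncomputable section

/-- The ideal generated by the variables indexed by `S`. -/
def varIdeal (K : Type*) [Field K] (N : ℕ) (S : Finset (Fin N)) :
    Ideal (MvPolynomial (Fin N) K) :=
  Ideal.span ((fun i => (X i : MvPolynomial (Fin N) K)) '' S)

/-- The edge ideal of a graph `G`, generated by `X i * X j` for edges `{i, j}`. -/
def edgeIdeal (K : Type*) [Field K] {N : ℕ} (G : SimpleGraph (Fin N)) :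
    Ideal (MvPolynomial (Fin N) K) :=
  Ideal.span {p | ∃ i j, G.Adj i j ∧ p = X i * X j}

/-- `S` is a vertex cover of `G`: every edge meets `S`. -/
def IsVertexCover {N : ℕ} (G : SimpleGraph (Fin N)) (S : Finset (Fin N)) : Prop :=
  ∀ ⦃i j : Fin N⦄, G.Adj i j → i ∈ S ∨ j ∈ S

/-- `S` is a minimal vertex cover of `G`. -/
def IsMinVertexCover {N : ℕ} (G : SimpleGraph (Fin N)) (S : Finset (Fin N)) : Prop :=
  IsVertexCover G S ∧ ∀ T ⊂ S, ¬ IsVertexCover G T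

/-- The `t`-th symbolic power of the edge ideal of `G`:
the intersection of the `t`-th powers of the minimal vertex cover primes. -/
def symbolicPower (K : Type*) [Field K] {N : ℕ} (G : SimpleGraph (Fin N)) (t : ℕ) :
    Ideal (MvPolynomial (Fin N) K) :=
  ⨅ (S : Finset (Fin N)) (_ : IsMinVertexCover G S), varIdeal K N S ^ t

/-- The cycle graph on `Fin m`, with edges `{i, i+1 mod m}`. -/
def cycleGraph (m : ℕ) : SimpleGraph (Fin m) :=
  SimpleGraph.fromRel (fun i j => (j : ℕ) = ((i : ℕ) + 1) % m)

/-- The set `L(t)` of monomials of degree at least `2t` whose weight with respect to every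
minimal vertex cover is at least `t`. -/
def Lset (K : Type*) [Field K] {N : ℕ} (G : SimpleGraph (Fin N)) (t : ℕ) :
    Set (MvPolynomial (Fin N) K) :=
  {p | ∃ a : Fin N →₀ ℕ, p = monomial a 1 ∧ 2 * t ≤ ∑ i, a i ∧
    ∀ S : Finset (Fin N), IsMinVertexCover G S → t ≤ ∑ i ∈ S, a i}

/-- The set `D(t)` of monomials of degree less than `2t` whose weight with respect to every
minimal vertex cover is at least `t`. -/
def Dset (K : Type*) [Field K] {N : ℕ} (G : SimpleGraph (Fin N)) (t : ℕ) :
    Set (MvPolynomial (Fin N) K) :=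
  {p | ∃ a : Fin N →₀ ℕ, p = monomial a 1 ∧ (∑ i, a i) < 2 * t ∧
    ∀ S : Finset (Fin N), IsMinVertexCover G S → t ≤ ∑ i ∈ S, a i}

/-- `α(J)`: the least total degree of a nonzero polynomial in `J`. -/
def alphaDeg {K : Type*} [Field K] {N : ℕ} (J : Ideal (MvPolynomial (Fin N) K)) : ℕ :=
  sInf {d | ∃ f ∈ J, f ≠ 0 ∧ f.totalDegree = d}

/-- The symbolic defect: the minimal number of generators one must add to `I(G)^t`
to obtain the symbolic power `I(G)^(t)`. -/
def sdefect (K : Type*) [Field K] {N : ℕ} (G : SimpleGraph (Fin N)) (t : ℕ) : ℕ :=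
  sInf {c | ∃ F : Finset (MvPolynomial (Fin N) K), F.card = c ∧
    symbolicPower K G t = edgeIdeal K G ^ t + Ideal.span (F : Set (MvPolynomial (Fin N) K))}

/-- The graph consisting of the odd cycle on vertices `0, …, 2n` (that is,
`x_1, …, x_{2n+1}`) together with one extra vertex `2n+1` (that is, `x_{2n+2}`)
joined to vertex `0` (that is, `x_1`) by an edge. -/
def appendedCycle (n : ℕ) : SimpleGraph (Fin (2 * n + 2)) :=
  SimpleGraph.fromRel (fun i j =>
    ((j : ℕ) = (i : ℕ) + 1 ∧ (j : ℕ) ≤ 2 * n) ∨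
    ((i : ℕ) = 2 * n ∧ (j : ℕ) = 0) ∨
    ((i : ℕ) = 0 ∧ (j : ℕ) = 2 * n + 1))


open Pointwise in
/-- The ideal of polynomials all of whose monomials have `S`-weight at least `t`. -/
def wIdeal (K : Type*) [Field K] {N : ℕ} (S : Finset (Fin N)) (t : ℕ) :
    Ideal (MvPolynomial (Fin N) K) where
  carrier := {f | ∀ a ∈ f.support, t ≤ ∑ i ∈ S, a i}
  zero_mem' := by simp
  add_mem' := by
    intro f g hf hg a ha
    have := MvPolynomial.support_add (p := f) (q := g) ha
    rcases Finset.mem_union.1 this with h | h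
    · exact hf a h
    · exact hg a h
  smul_mem' := by
    intro c f hf a ha
    have := MvPolynomial.support_mul c f ha
    rcases Finset.mem_add.1 this with ⟨b, hb, d, hd, rfl⟩
    have := hf d hd
    simp only [Finsupp.add_apply, Finset.sum_add_distrib]
    omega

lemma sum_single_mem {N : ℕ} (S : Finset (Fin N)) {i : Fin N} (hi : i ∈ S) :
    ∑ j ∈ S, (Finsupp.single i 1) j = 1 := by
  rw [Finset.sum_eq_single i]
  · simp
  · intro b _ hb; simp [Finsupp.single_apply, Ne.symm hb]
  · intro hnot; exact absurd hi hnot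

lemma varIdeal_le_wIdeal (K : Type*) [Field K] {N : ℕ} (S : Finset (Fin N)) :
    varIdeal K N S ≤ wIdeal K S 1 := by
  rw [varIdeal, Ideal.span_le]
  rintro p ⟨i, hi, rfl⟩
  intro a ha
  rw [MvPolynomial.support_X, Finset.mem_singleton] at ha
  subst ha
  rw [sum_single_mem S hi]

open Pointwise in
lemma varIdeal_pow_le_wIdeal (K : Type*) [Field K] {N : ℕ} (S : Finset (Fin N)) (t : ℕ) :
    varIdeal K N S ^ t ≤ wIdeal K S t := by
  induction t with
  | zero => intro f _; intro a _; simp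
  | succ t ih =>
    rw [pow_succ]
    refine le_trans (Ideal.mul_le.2 ?_) le_rfl
    intro f hf g hg
    intro a ha
    have := MvPolynomial.support_mul f g ha
    rcases Finset.mem_add.1 this with ⟨b, hb, d, hd, rfl⟩
    have h1 := ih hf b hb
    have h2 := varIdeal_le_wIdeal K S hg d hd
    simp only [Finsupp.add_apply, Finset.sum_add_distrib]
    omega

lemma monomial_mem_varIdeal_pow (K : Type*) [Field K] {N : ℕ} (S : Finset (Fin N)) (t : ℕ)
    (a : Fin N →₀ ℕ) (h : t ≤ ∑ i ∈ S, a i) :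
    monomial a (1:K) ∈ varIdeal K N S ^ t := by
  induction t generalizing a with
  | zero => simp
  | succ t ih =>
    have hpos : 0 < ∑ i ∈ S, a i := by omega
    obtain ⟨i, hi, hai⟩ : ∃ i ∈ S, 0 < a i := by
      by_contra hc
      push_neg at hc
      have : ∑ i ∈ S, a i = 0 := Finset.sum_eq_zero (fun i hi => by have := hc i hi; omega)
      omega
    have hle : Finsupp.single i 1 ≤ a := by
      rw [Finsupp.single_le_iff]; omega
    set a' := a - Finsupp.single i 1 with ha'
    have hsum : a' + Finsupp.single i 1 = a := tsub_add_cancel_of_le hle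
    have key : (monomial a (1:K)) = monomial a' 1 * X i := by
      rw [MvPolynomial.X, MvPolynomial.monomial_mul, mul_one, hsum]
    rw [key, pow_succ]
    apply Ideal.mul_mem_mul
    · apply ih
      have : ∑ j ∈ S, a' j + ∑ j ∈ S, (Finsupp.single i 1) j = ∑ j ∈ S, a j := by
        rw [← Finset.sum_add_distrib]
        exact Finset.sum_congr rfl (fun j _ => by rw [← Finsupp.add_apply, hsum])
      have hs : ∑ j ∈ S, (Finsupp.single i 1) j = 1 := sum_single_mem S hi
      omega
    · exact Ideal.subset_span ⟨i, by simpa using hi, rfl⟩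

section CycleAux

variable {n : ℕ}

lemma val_succ (hn : 1 ≤ n) (i : Fin (2*n+1)) :
    ((i + 1 : Fin (2*n+1)) : ℕ) = ((i : ℕ) + 1) % (2*n+1) := by
  rw [Fin.val_add, Fin.val_one']
  rw [Nat.add_mod (i : ℕ) 1, Nat.mod_eq_of_lt i.isLt]

lemma succ_ne (hn : 1 ≤ n) (i : Fin (2*n+1)) : i ≠ i + 1 := by
  intro h
  have := val_succ hn i
  rw [← h] at this
  rcases Nat.lt_or_ge ((i:ℕ)+1) (2*n+1) with h1 | h1
  · rw [Nat.mod_eq_of_lt h1] at this; omega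
  · have hi := i.isLt
    have h2 : (i:ℕ) = 2*n := by omega
    rw [h2] at this
    rw [Nat.mod_self] at this
    omega

lemma adj_cycle_iff (hn : 1 ≤ n) (i j : Fin (2*n+1)) :
    (cycleGraph (2*n+1)).Adj i j ↔ i ≠ j ∧ (j = i + 1 ∨ i = j + 1) := by
  rw [cycleGraph, SimpleGraph.fromRel_adj]
  constructor
  · rintro ⟨hne, h | h⟩
    · exact ⟨hne, Or.inl (Fin.ext (by rw [val_succ hn i]; exact h))⟩
    · exact ⟨hne, Or.inr (Fin.ext (by rw [val_succ hn j]; exact h))⟩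
  · rintro ⟨hne, h | h⟩
    · exact ⟨hne, Or.inl (by rw [h, val_succ hn i])⟩
    · exact ⟨hne, Or.inr (by rw [h, val_succ hn j])⟩

lemma adj_succ (hn : 1 ≤ n) (i : Fin (2*n+1)) :
    (cycleGraph (2*n+1)).Adj i (i+1) :=
  (adj_cycle_iff hn i (i+1)).2 ⟨succ_ne hn i, Or.inl rfl⟩

/-- the rotated standard minimal vertex cover -/
def Sc (n : ℕ) (s : Fin (2*n+1)) : Finset (Fin (2*n+1)) :=
  Finset.univ.filter (fun i => ((i - s : Fin (2*n+1)) : ℕ) % 2 = 0)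

lemma mem_Sc {s i : Fin (2*n+1)} :
    i ∈ Sc n s ↔ ((i - s : Fin (2*n+1)) : ℕ) % 2 = 0 := by
  simp [Sc]

lemma val_add_one_cases (hn : 1 ≤ n) (d : Fin (2*n+1)) :
    ((d + 1 : Fin (2*n+1)) : ℕ) = 0 ∧ (d : ℕ) = 2*n ∨
    ((d + 1 : Fin (2*n+1)) : ℕ) = (d : ℕ) + 1 := by
  have h := val_succ hn d
  have hi := d.isLt
  rcases Nat.lt_or_ge ((d:ℕ)+1) (2*n+1) with h1 | h1
  · right; rw [h, Nat.mod_eq_of_lt h1]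
  · left
    have hd : (d:ℕ) = 2*n := by omega
    constructor
    · rw [h, hd]; simp
    · exact hd

lemma Sc_cover (hn : 1 ≤ n) (s : Fin (2*n+1)) :
    IsVertexCover (cycleGraph (2*n+1)) (Sc n s) := by
  intro i j hadj
  rw [adj_cycle_iff hn] at hadj
  obtain ⟨hne, hc⟩ := hadj
  by_cases hd : ((i - s : Fin (2*n+1)) : ℕ) % 2 = 0
  · exact Or.inl (mem_Sc.2 hd)
  rcases hc with rfl | rfl
  · right
    rw [mem_Sc]
    have he : (i + 1 - s : Fin (2*n+1)) = (i - s) + 1 := by abel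
    rw [he]
    rcases val_add_one_cases hn (i - s) with ⟨h1, h2⟩ | h1
    · omega
    · rw [h1]; omega
  · right
    rw [mem_Sc]
    have he : (j + 1 - s : Fin (2*n+1)) = (j - s) + 1 := by abel
    rw [he] at hd
    rcases val_add_one_cases hn (j - s) with ⟨h1, h2⟩ | h1
    · omega
    · rw [h1] at hd; omega

lemma Sc_exists_uncovered (hn : 1 ≤ n) (s : Fin (2*n+1)) {v : Fin (2*n+1)}
    (hv : v ∈ Sc n s) : ∃ u, (cycleGraph (2*n+1)).Adj u v ∧ u ∉ Sc n s := by
  rw [mem_Sc] at hv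
  rcases val_add_one_cases hn (v - s) with ⟨h1, h2⟩ | h1
  · refine ⟨v - 1, ?_, ?_⟩
    · have h := adj_succ hn (v - 1)
      rw [show (v - 1) + 1 = v from by abel] at h
      exact h
    · rw [mem_Sc]
      have he : (v - 1 - s : Fin (2*n+1)) = (v - s) - 1 := by abel
      rw [he]
      have hd : (v - s : Fin (2*n+1)) = ((v - s) - 1) + 1 := by abel
      rcases val_add_one_cases hn ((v - s) - 1) with ⟨g1, g2⟩ | g1
      · rw [← hd] at g1; omega
      · rw [← hd] at g1; omega
  · refine ⟨v + 1, ?_, ?_⟩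
    · exact (adj_succ hn v).symm
    · rw [mem_Sc]
      have he : (v + 1 - s : Fin (2*n+1)) = (v - s) + 1 := by abel
      rw [he, h1]
      omega

lemma Sc_min (hn : 1 ≤ n) (s : Fin (2*n+1)) :
    IsMinVertexCover (cycleGraph (2*n+1)) (Sc n s) := by
  refine ⟨Sc_cover hn s, ?_⟩
  intro T hT hcov
  obtain ⟨v, hvS, hvT⟩ := Finset.exists_of_ssubset hT
  obtain ⟨u, hadj, huS⟩ := Sc_exists_uncovered hn s hvS
  rcases hcov hadj with h | h
  · exact huS (hT.subset h)
  · exact hvT h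

lemma evens_range_card : ∀ k : ℕ,
    ((Finset.range (2*k+1)).filter (fun x => x % 2 = 0)).card = k+1 := by
  intro k
  induction k with
  | zero => decide
  | succ k ih =>
    have h : 2*(k+1)+1 = (2*k+1) + 1 + 1 := by ring
    rw [h, Finset.range_add_one, Finset.range_add_one, Finset.filter_insert, Finset.filter_insert]
    rw [if_pos (show (2*k+1+1) % 2 = 0 by omega), if_neg (show ¬ (2*k+1) % 2 = 0 by omega)]
    rw [Finset.card_insert_of_notMem (by
      intro hmem
      rw [Finset.mem_filter, Finset.mem_range] at hmem
      omega), ih]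

lemma evens_card (hn : 1 ≤ n) :
    (Finset.univ.filter (fun d : Fin (2*n+1) => (d : ℕ) % 2 = 0)).card = n+1 := by
  have himg : (Finset.univ.filter (fun d : Fin (2*n+1) => (d : ℕ) % 2 = 0)).image Fin.val
      = (Finset.range (2*n+1)).filter (fun x => x % 2 = 0) := by
    ext x
    simp only [Finset.mem_image, Finset.mem_filter, Finset.mem_univ, true_and,
      Finset.mem_range]
    constructor
    · rintro ⟨d, hd, rfl⟩; exact ⟨d.isLt, hd⟩
    · rintro ⟨hx, hp⟩; exact ⟨⟨x, hx⟩, hp, rfl⟩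
  have := Finset.card_image_of_injective
    (Finset.univ.filter (fun d : Fin (2*n+1) => (d : ℕ) % 2 = 0)) (Fin.val_injective)
  rw [himg, evens_range_card n] at this
  omega

lemma count_Sc (hn : 1 ≤ n) (i : Fin (2*n+1)) :
    (Finset.univ.filter (fun s : Fin (2*n+1) => i ∈ Sc n s)).card = n+1 := by
  rw [← evens_card hn]
  apply Finset.card_bij' (fun s _ => i - s) (fun d _ => i - d)
  · intro s hs
    simp only [Finset.mem_filter, Finset.mem_univ, true_and] at hs ⊢
    exact mem_Sc.1 hs
  · intro d hd
    simp only [Finset.mem_filter, Finset.mem_univ, true_and] at hd ⊢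
    rw [mem_Sc]
    have : i - (i - d) = d := by abel
    rw [this]
    exact hd
  · intro s _; abel
  · intro d _; abel

lemma cover_card (hn : 1 ≤ n) (S : Finset (Fin (2*n+1)))
    (hS : IsVertexCover (cycleGraph (2*n+1)) S) : n+1 ≤ S.card := by
  classical
  set T := Finset.univ \ S with hT
  have hdisj : Disjoint T (T.image (· + 1)) := by
    rw [Finset.disjoint_left]
    intro x hx hx'
    obtain ⟨y, hy, rfl⟩ := Finset.mem_image.1 hx'
    have hadj := adj_succ hn y
    rcases hS hadj with h | h
    · exact (Finset.mem_sdiff.1 hy).2 h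
    · exact (Finset.mem_sdiff.1 hx).2 h
  have hcard : T.card + (T.image (· + 1)).card
      ≤ (Finset.univ : Finset (Fin (2*n+1))).card := by
    rw [← Finset.card_union_of_disjoint hdisj]
    exact Finset.card_le_card (Finset.subset_univ _)
  have himg : (T.image (· + 1)).card = T.card :=
    Finset.card_image_of_injective _ (add_left_injective 1)
  have hTc : T.card = (2*n+1) - S.card := by
    rw [hT, Finset.card_sdiff_of_subset (Finset.subset_univ S)]
    simp
  have hSle : S.card ≤ 2*n+1 := by
    have := Finset.card_le_card (Finset.subset_univ S)
    simpa using this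
  rw [himg, hTc] at hcard
  simp only [Finset.card_univ, Fintype.card_fin] at hcard
  omega

lemma sum_Sc (hn : 1 ≤ n) (a : Fin (2*n+1) →₀ ℕ) :
    ∑ s : Fin (2*n+1), ∑ i ∈ Sc n s, a i = (n+1) * ∑ i, a i := by
  have h1 : ∀ s : Fin (2*n+1), ∑ i ∈ Sc n s, a i
      = ∑ i : Fin (2*n+1), if i ∈ Sc n s then a i else 0 := by
    intro s; rw [Finset.sum_ite_mem, Finset.univ_inter]
  simp_rw [h1]
  rw [Finset.sum_comm]
  have h2 : ∀ i : Fin (2*n+1), (∑ s : Fin (2*n+1), if i ∈ Sc n s then a i else 0)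
      = (n+1) * a i := by
    intro i
    rw [← Finset.sum_filter, Finset.sum_const, count_Sc hn i, smul_eq_mul]
  simp_rw [h2]
  rw [Finset.mul_sum]

lemma sum_candidate (hn : 1 ≤ n) (q r : ℕ)
    (a : Fin (2*n+1) →₀ ℕ)
    (ha : a = Finsupp.equivFunOnFinite.symm
      (fun i => q + (if i = 0 then r else 0) + (if i = 1 then r else 0))) :
    ∑ i, a i = (2*n+1)*q + 2*r := by
  have happ : ∀ i, a i = q + (if i = 0 then r else 0) + (if i = 1 then r else 0) := by
    intro i; rw [ha]; simp [Finsupp.equivFunOnFinite]; rfl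
  simp_rw [happ]
  rw [Finset.sum_add_distrib, Finset.sum_add_distrib, Finset.sum_const,
    Finset.sum_ite_eq' Finset.univ (0 : Fin (2*n+1)) (fun _ => r),
    Finset.sum_ite_eq' Finset.univ (1 : Fin (2*n+1)) (fun _ => r)]
  simp only [Finset.mem_univ, if_pos, Finset.card_univ, Fintype.card_fin, smul_eq_mul]
  ring

lemma sum_candidate_cover (hn : 1 ≤ n) (q r : ℕ) (S : Finset (Fin (2*n+1)))
    (hcard : n+1 ≤ S.card) (hO : (0 : Fin (2*n+1)) ∈ S ∨ (1 : Fin (2*n+1)) ∈ S)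
    (a : Fin (2*n+1) →₀ ℕ)
    (ha : a = Finsupp.equivFunOnFinite.symm
      (fun i => q + (if i = 0 then r else 0) + (if i = 1 then r else 0))) :
    (n+1)*q + r ≤ ∑ i ∈ S, a i := by
  have happ : ∀ i, a i = q + (if i = 0 then r else 0) + (if i = 1 then r else 0) := by
    intro i; rw [ha]; simp [Finsupp.equivFunOnFinite]; rfl
  simp_rw [happ]
  rw [Finset.sum_add_distrib, Finset.sum_add_distrib, Finset.sum_const,
    Finset.sum_ite_eq' S (0 : Fin (2*n+1)) (fun _ => r),
    Finset.sum_ite_eq' S (1 : Fin (2*n+1)) (fun _ => r), smul_eq_mul]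
  have h1 : (n+1)*q ≤ S.card * q := Nat.mul_le_mul hcard (le_refl q)
  have hge : r ≤ (if (0:Fin (2*n+1)) ∈ S then r else 0)
      + (if (1:Fin (2*n+1)) ∈ S then r else 0) := by
    rcases hO with h | h
    · rw [if_pos h]; exact Nat.le_add_right r _
    · rw [if_pos h]; exact Nat.le_add_left r _
  calc (n+1)*q + r ≤ S.card * q + ((if (0:Fin (2*n+1)) ∈ S then r else 0)
        + (if (1:Fin (2*n+1)) ∈ S then r else 0)) := Nat.add_le_add h1 hge
    _ = _ := by ring

lemma arith_lower (n t d q r : ℕ) (hq : (n+1)*q + r = t) (hr : r < n+1)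
    (h : (2*n+1)*t ≤ (n+1)*d) : (2*n+1)*q + 2*r ≤ d := by
  by_contra hcon
  push_neg at hcon
  have hs : d + 1 ≤ (2*n+1)*q + 2*r := hcon
  have hmul : (n+1)*(d+1) ≤ (n+1)*((2*n+1)*q + 2*r) := Nat.mul_le_mul (le_refl _) hs
  have h5 : (2*n+1)*((n+1)*q + r) = (2*n+1)*t := by rw [hq]
  nlinarith [hmul, h5, h, hr]

end CycleAux

/-- For the edge ideal of the odd cycle `C_{2n+1}`,
`α(I^(t)) = 2t - ⌊t/(n+1)⌋`. -/
theorem alpha_symbolicPower (K : Type*) [Field K] (n t : ℕ)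
    (hn : 1 ≤ n) (ht : 1 ≤ t) :
    alphaDeg (symbolicPower K (cycleGraph (2 * n + 1)) t)
      = 2 * t - t / (n + 1) := by
  classical
  set q := t / (n+1) with hq'
  set r := t % (n+1) with hr'
  have hq : (n+1)*q + r = t := Nat.div_add_mod t (n+1)
  have hr : r < n+1 := Nat.mod_lt t (by omega)
  have h2t : 2*t = (2*n+1)*q + 2*r + q := by rw [← hq]; ring
  unfold alphaDeg
  rw [h2t, Nat.add_sub_cancel]
  set a : Fin (2*n+1) →₀ ℕ := Finsupp.equivFunOnFinite.symm
      (fun i => q + (if i = 0 then r else 0) + (if i = 1 then r else 0)) with haDef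
  have hasum : ∑ i, a i = (2*n+1)*q + 2*r := sum_candidate hn q r a haDef
  have hne : (monomial a (1:K)) ≠ 0 := by simp [MvPolynomial.monomial_eq_zero]
  have hdeg : (monomial a (1:K)).totalDegree = (2*n+1)*q + 2*r := by
    rw [totalDegree_monomial _ (one_ne_zero)]
    rw [Finsupp.sum_fintype _ _ (fun _ => rfl)]
    exact hasum
  have hmemJ : (monomial a (1:K)) ∈ symbolicPower K (cycleGraph (2*n+1)) t := by
    unfold symbolicPower
    rw [Submodule.mem_iInf]
    intro S
    rw [Submodule.mem_iInf]
    intro hS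
    apply monomial_mem_varIdeal_pow
    have hO : (0 : Fin (2*n+1)) ∈ S ∨ (1 : Fin (2*n+1)) ∈ S := by
      apply hS.1
      have h01 := adj_succ hn 0
      rwa [zero_add] at h01
    have hcard := cover_card hn S hS.1
    have hle := sum_candidate_cover hn q r S hcard hO a haDef
    rw [hq] at hle
    exact hle
  apply le_antisymm
  · exact Nat.sInf_le ⟨monomial a 1, hmemJ, hne, hdeg⟩
  · refine le_csInf ⟨(2*n+1)*q + 2*r, ⟨monomial a 1, hmemJ, hne, hdeg⟩⟩ ?_
    rintro d ⟨f, hfJ, hf0, rfl⟩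
    obtain ⟨b, hb⟩ : f.support.Nonempty := by
      rw [Finset.nonempty_iff_ne_empty]
      simpa [MvPolynomial.support_eq_empty] using hf0
    have hw : ∀ s : Fin (2*n+1), t ≤ ∑ i ∈ Sc n s, b i := by
      intro s
      have h1 : f ∈ varIdeal K (2*n+1) (Sc n s) ^ t := by
        unfold symbolicPower at hfJ
        exact (Submodule.mem_iInf _).1 ((Submodule.mem_iInf _).1 hfJ (Sc n s)) (Sc_min hn s)
      exact varIdeal_pow_le_wIdeal K (Sc n s) t h1 b hb
    have hsum1 : (2*n+1)*t ≤ ∑ s : Fin (2*n+1), ∑ i ∈ Sc n s, b i := by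
      calc (2*n+1)*t = ∑ _s : Fin (2*n+1), t := by
            rw [Finset.sum_const, Finset.card_univ, Fintype.card_fin, smul_eq_mul]
        _ ≤ _ := Finset.sum_le_sum (fun s _ => hw s)
    rw [sum_Sc hn b] at hsum1
    have hbd : ∑ i, b i ≤ f.totalDegree := by
      have := MvPolynomial.le_totalDegree hb
      rwa [Finsupp.sum_fintype _ _ (fun _ => rfl)] at this
    have h2 : (2*n+1)*t ≤ (n+1)*f.totalDegree :=
      le_trans hsum1 (Nat.mul_le_mul (le_refl _) hbd)
    exact arith_lower n t f.totalDegree q r hq hr h2
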